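/- arXiv:1509.06357 — 2 statements merged into one kernel-verified Lean document; each statement's English description precedes it below -/
import Mathlib

section
/- (Introduce rule.) Let k ≥ 1 and let (G,T) be a terminal graph obtained from (G−v, T∖{v}) by introducing v, i.e., T ≠ V(G), v ∈ T, and every neighbor of v in G lies in T. Let (H,ℓ) = C^c_k(G−v, T∖{v}). Define a labeled graph (H',ℓ') as follows: for every node x of H and every color c ∈ {1,…,k}, if the unique function δ : T → {1,…,k} with δ(v) = c and δ restricted to T∖{v} equal to ℓ(x) is a proper k-coloring of G[T], then H' has a node x_c with label ℓ'(x_c) = δ; two distinct nodes x_c and y_d of H' are adjacent if and only if (1) x = y, or (2) xy is an edge of H and c = d. Then (H',ℓ') = C^c_k(G,T). Moreover, for every k-coloring γ of G, if x is the node of H whose label component contains the restriction of γ to V(G)∖{v}, and c = γ(v), then x_c is the γ-node of C^c_k(G,T). -/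
set_option linter.unusedSectionVars false


open SimpleGraph

/-- A proper `k`-coloring of a graph. -/
def IsColoring {W : Type*} (G : SimpleGraph W) (k : ℕ) (α : W → Fin k) : Prop :=
  ∀ u v : W, G.Adj u v → α u ≠ α v

/-- The `k`-color graph `C_k(G)`: nodes are proper `k`-colorings of `G`,
two colorings being adjacent iff they differ on exactly one vertex. -/
def colorGraph {W : Type*} (G : SimpleGraph W) (k : ℕ) :
    SimpleGraph {α : W → Fin k // IsColoring G k α} where
  Adj α β := ∃! w, α.1 w ≠ β.1 w
  symm := ⟨by
    rintro α β ⟨w, hw, hu⟩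
    exact ⟨w, hw.symm, fun u hu' => hu u hu'.symm⟩⟩
  loopless := ⟨by
    rintro α ⟨w, hw, -⟩
    exact hw rfl⟩

/-- The subgraph of a labeled graph consisting of the edges between
equally labeled nodes. -/
def sameLabelSub {N L : Type*} (H : SimpleGraph N) (f : N → L) : SimpleGraph N where
  Adj x y := H.Adj x y ∧ f x = f y
  symm := ⟨fun _ _ h => ⟨h.1.symm, h.2.symm⟩⟩
  loopless := ⟨fun x h => H.irrefl h.1⟩

/-- The quotient graph obtained from a labeled graph by contracting every
(maximal) connected set of equally labeled nodes (i.e. every label component)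
into a single node. -/
def quotGraph {N L : Type*} (H : SimpleGraph N) (f : N → L) :
    SimpleGraph (sameLabelSub H f).ConnectedComponent where
  Adj c d := c ≠ d ∧ ∃ a b, (sameLabelSub H f).connectedComponentMk a = c ∧
      (sameLabelSub H f).connectedComponentMk b = d ∧ H.Adj a b
  symm := ⟨by
    rintro c d ⟨hne, a, b, ha, hb, hab⟩
    exact ⟨hne.symm, b, a, hb, ha, hab.symm⟩⟩
  loopless := ⟨fun c h => h.1 rfl⟩

/-- The common label of a label component. -/
def quotLabel {N L : Type*} (H : SimpleGraph N) (f : N → L) :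
    (sameLabelSub H f).ConnectedComponent → L :=
  SimpleGraph.ConnectedComponent.lift f (by
    intro v w p hp
    clear hp
    induction p with
    | nil => rfl
    | cons h _ ih => exact (show H.Adj _ _ ∧ f _ = f _ from h).2.trans ih)

/-- The label of a coloring: its restriction to the terminal set `T`. -/
def csgLabelFun {W : Type*} (G : SimpleGraph W) (k : ℕ) (T : Set W) :
    {α : W → Fin k // IsColoring G k α} → (T → Fin k) :=
  fun α t => α.1 t.1

/-- The node set of the contracted solution graph: the label components. -/
abbrev CSGNode {W : Type*} (G : SimpleGraph W) (k : ℕ) (T : Set W) :=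
  (sameLabelSub (colorGraph G k) (csgLabelFun G k T)).ConnectedComponent

/-- The contracted solution graph `C^c_k(G,T)`. -/
def CSG {W : Type*} (G : SimpleGraph W) (k : ℕ) (T : Set W) : SimpleGraph (CSGNode G k T) :=
  quotGraph (colorGraph G k) (csgLabelFun G k T)

/-- The `γ`-node of the contracted solution graph: the label component containing `γ`. -/
def csgNode {W : Type*} (G : SimpleGraph W) (k : ℕ) (T : Set W)
    (γ : {α : W → Fin k // IsColoring G k α}) : CSGNode G k T :=
  (sameLabelSub (colorGraph G k) (csgLabelFun G k T)).connectedComponentMk γ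

/-- The label of a node of the contracted solution graph: the common restriction
to `T` of its colorings. -/
def csgLabel {W : Type*} (G : SimpleGraph W) (k : ℕ) (T : Set W) :
    CSGNode G k T → (T → Fin k) :=
  quotLabel (colorGraph G k) (csgLabelFun G k T)

/-- The restriction of a proper coloring to an induced subgraph. -/
def restrictColoring {W : Type*} (G : SimpleGraph W) (k : ℕ) (S : Set W)
    (γ : {α : W → Fin k // IsColoring G k α}) :
    {α : S → Fin k // IsColoring (G.induce S) k α} :=
  ⟨fun u => γ.1 u.1, fun u w h => γ.2 u.1 w.1 h⟩

/-- A graph is chordal if it contains no induced cycle of length greater than 3. -/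
def Chordal {W : Type*} (G : SimpleGraph W) : Prop :=
  ∀ n : ℕ, 4 ≤ n → IsEmpty (SimpleGraph.cycleGraph n ↪g G)

/-- `S` is a vertex cut: `G - S` is disconnected. -/
def IsVertexCut {W : Type*} (G : SimpleGraph W) (S : Set W) : Prop :=
  ¬ (G.induce Sᶜ).Preconnected

/-- `G` is `l`-connected. -/
def LConnected {W : Type*} (G : SimpleGraph W) (l : ℕ) : Prop :=
  G.Connected ∧ l + 1 ≤ Nat.card W ∧ ∀ S : Set W, IsVertexCut G S → l ≤ S.ncard

/-- A labeled graph `(H,ℓ)`, whose labels are `k`-colorings of the complete graph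
on a vertex (type) `S`, is an `(|S|,k)`-color-complete graph. -/
def IsColorComplete {N S : Type*} (k : ℕ) (H : SimpleGraph N) (ℓ : N → S → Fin k) : Prop :=
  (∀ x, Function.Injective (ℓ x)) ∧
  (∀ f : S → Fin k, Function.Injective f → ∃! x, ℓ x = f) ∧
  (∀ x y, H.Adj x y ↔ ∃! s, ℓ x s ≠ ℓ y s)

/-- The injective neighborhood property. -/
def INP {N L : Type*} (H : SimpleGraph N) (ℓ : N → L) : Prop :=
  ∀ u v w : N, H.Adj u v → H.Adj u w → v ≠ w → ℓ v ≠ ℓ w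

/-- The weight `w(P)` of a walk `P` in a labeled graph: the sum over the vertices `x`
of `P` of the number of colors used by labels of neighbors of `x` in `P` but not by
the label of `x`. -/
noncomputable def walkWeight {N S : Type*} {k : ℕ} {G : SimpleGraph N} (ℓ : N → S → Fin k)
    {a b : N} (P : G.Walk a b) : ℕ :=
  letI := Classical.decEq N
  ∑ x ∈ P.support.toFinset,
    ((⋃ y ∈ P.toSubgraph.neighborSet x, Set.range (ℓ y)) \ Set.range (ℓ x)).ncard

/-- The vertex set of `G - v`. -/
def delSet {V : Type*} (v : V) : Set V := {u | u ≠ v}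

/-- The terminal set `T \ {v}`, viewed as a set of vertices of `G - v`. -/
def Tdel {V : Type*} (T : Set V) (v : V) : Set ↥(delSet v) := {u | u.1 ∈ T}

/-- The extension of a `k`-coloring `f` of `G[T \ {v}]` by assigning color `c` to `v`. -/
def extLabel {V : Type*} [DecidableEq V] (T : Set V) (v : V) {k : ℕ} (c : Fin k)
    (f : ↥(Tdel T v) → Fin k) : ↥T → Fin k :=
  fun t => if h : t.1 = v then c else f ⟨⟨t.1, h⟩, t.2⟩

/-- The node set of the graph constructed in the introduce rule: pairs of a node `x`
of `C^c_k(G-v, T \ {v})` and a color `c` whose corresponding extended label is a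
proper `k`-coloring of `G[T]`. -/
def IntroNode {V : Type*} [DecidableEq V] (G : SimpleGraph V) (k : ℕ) (T : Set V) (v : V) :=
  {p : CSGNode (G.induce (delSet v)) k (Tdel T v) × Fin k //
    IsColoring (G.induce T) k
      (extLabel T v p.2 (csgLabel (G.induce (delSet v)) k (Tdel T v) p.1))}

/-- The graph constructed in the introduce rule: two distinct nodes `x_c` and `y_d`
are adjacent iff `x = y`, or `xy` is an edge and `c = d`. -/
def introGraph {V : Type*} [DecidableEq V] (G : SimpleGraph V) (k : ℕ) (T : Set V) (v : V) :
    SimpleGraph (IntroNode G k T v) where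
  Adj p q := p ≠ q ∧ (p.1.1 = q.1.1 ∨
      ((CSG (G.induce (delSet v)) k (Tdel T v)).Adj p.1.1 q.1.1 ∧ p.1.2 = q.1.2))
  symm := ⟨by
    rintro p q ⟨hne, h | ⟨h, e⟩⟩
    · exact ⟨hne.symm, Or.inl h.symm⟩
    · exact ⟨hne.symm, Or.inr ⟨h.symm, e.symm⟩⟩⟩
  loopless := ⟨fun p h => h.1 rfl⟩

section IntroRuleAux

variable {V : Type} [Fintype V] [DecidableEq V] {G : SimpleGraph V} {k : ℕ} {T : Set V} {v : V}

/-- The same-label subgraph of the color graph. -/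
abbrev SLG (G : SimpleGraph V) (k : ℕ) (T : Set V) :
    SimpleGraph {α : V → Fin k // IsColoring G k α} :=
  sameLabelSub (colorGraph G k) (csgLabelFun G k T)

/-- Colorings of `G - v`. -/
abbrev DColoring (G : SimpleGraph V) (k : ℕ) (v : V) :=
  {α : ↥(delSet v) → Fin k // IsColoring (G.induce (delSet v)) k α}

/-- Compatibility of a color `c` for `v` with a coloring of `G - v`. -/
def Compat (G : SimpleGraph V) (k : ℕ) (v : V) (β : DColoring G k v) (c : Fin k) : Prop :=
  ∀ u (h : G.Adj v u), c ≠ β.1 ⟨u, h.ne'⟩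

/-- Extend a coloring of `G - v` by a compatible color at `v`. -/
def extColoring (β : DColoring G k v) (c : Fin k) (hc : Compat G k v β c) :
    {α : V → Fin k // IsColoring G k α} :=
  ⟨fun u => if h : u = v then c else β.1 ⟨u, h⟩, by
    intro u w hadj
    show (if h : u = v then c else β.1 ⟨u, h⟩) ≠ (if h : w = v then c else β.1 ⟨w, h⟩)
    by_cases hu : u = v
    · rw [dif_pos hu]
      have hw : w ≠ v := fun e => hadj.ne (hu.trans e.symm)
      rw [dif_neg hw]
      exact hc w (hu ▸ hadj)
    · rw [dif_neg hu]
      by_cases hw : w = v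
      · rw [dif_pos hw]
        exact fun e => hc u ((hw ▸ hadj).symm) e.symm
      · rw [dif_neg hw]
        exact β.2 ⟨u, hu⟩ ⟨w, hw⟩ hadj⟩

lemma ext_val_v (β : DColoring G k v) (c : Fin k) (hc : Compat G k v β c) :
    (extColoring β c hc).1 v = c := dif_pos rfl

lemma label_ext (β : DColoring G k v) (c : Fin k) (hc : Compat G k v β c) :
    csgLabelFun G k T (extColoring β c hc) =
      extLabel T v c (csgLabelFun (G.induce (delSet v)) k (Tdel T v) β) := rfl

lemma compat_restrict (γ : {α : V → Fin k // IsColoring G k α}) :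
    Compat G k v (restrictColoring G k (delSet v) γ) (γ.1 v) :=
  fun u h => γ.2 v u h

lemma compat_congr (hN : ∀ u : V, G.Adj v u → u ∈ T) {β β' : DColoring G k v}
    (hl : csgLabelFun (G.induce (delSet v)) k (Tdel T v) β =
      csgLabelFun (G.induce (delSet v)) k (Tdel T v) β')
    {c : Fin k} (hc : Compat G k v β c) : Compat G k v β' c := by
  intro u h
  have e : β.1 ⟨u, h.ne'⟩ = β'.1 ⟨u, h.ne'⟩ :=
    congrFun hl ⟨⟨u, h.ne'⟩, hN u h⟩
  rw [← e]; exact hc u h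

lemma compat_of_proper (hvT : v ∈ T) (hN : ∀ u : V, G.Adj v u → u ∈ T)
    {β : DColoring G k v} {c : Fin k}
    (hp : IsColoring (G.induce T) k
      (extLabel T v c (csgLabelFun (G.induce (delSet v)) k (Tdel T v) β))) :
    Compat G k v β c := by
  intro u h
  have hadj : (G.induce T).Adj ⟨v, hvT⟩ ⟨u, hN u h⟩ := h
  have hne := hp _ _ hadj
  have e1 : extLabel T v c (csgLabelFun (G.induce (delSet v)) k (Tdel T v) β)
      ⟨v, hvT⟩ = c := dif_pos rfl
  have e2 : extLabel T v c (csgLabelFun (G.induce (delSet v)) k (Tdel T v) β)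
      ⟨u, hN u h⟩ = β.1 ⟨u, h.ne'⟩ := dif_neg h.ne'
  rw [e1, e2] at hne
  exact hne

lemma restrict_ext (β : DColoring G k v) (c : Fin k) (hc : Compat G k v β c) :
    restrictColoring G k (delSet v) (extColoring β c hc) = β := by
  apply Subtype.ext
  funext u
  show (if h : (u : V) = v then c else β.1 ⟨u.1, h⟩) = β.1 u
  rw [dif_neg u.2]

lemma ext_restrict (γ : {α : V → Fin k // IsColoring G k α})
    (hc : Compat G k v (restrictColoring G k (delSet v) γ) (γ.1 v)) :
    extColoring (restrictColoring G k (delSet v) γ) (γ.1 v) hc = γ := by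
  apply Subtype.ext
  funext u
  show (if h : u = v then γ.1 v else γ.1 u) = γ.1 u
  split
  · next h => rw [h]
  · rfl

lemma lift_adj {β β' : DColoring G k v} {c : Fin k} (hc : Compat G k v β c)
    (hc' : Compat G k v β' c)
    (hadj : (colorGraph (G.induce (delSet v)) k).Adj β β') :
    (colorGraph G k).Adj (extColoring β c hc) (extColoring β' c hc') := by
  obtain ⟨w, hw, huniq⟩ := hadj
  refine ⟨w.1, ?_, ?_⟩
  · show (if h : (w : V) = v then c else β.1 ⟨w.1, h⟩) ≠
      (if h : (w : V) = v then c else β'.1 ⟨w.1, h⟩)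
    rw [dif_neg w.2, dif_neg w.2]
    simpa using hw
  · intro u hu
    by_cases huv : u = v
    · exfalso
      apply hu
      show (if h : u = v then c else _) = (if h : u = v then c else _)
      rw [dif_pos huv, dif_pos huv]
    · have hu' : β.1 ⟨u, huv⟩ ≠ β'.1 ⟨u, huv⟩ := by
        intro e
        apply hu
        show (if h : u = v then c else β.1 ⟨u, h⟩) = (if h : u = v then c else β'.1 ⟨u, h⟩)
        rw [dif_neg huv, dif_neg huv, e]
      have := huniq ⟨u, huv⟩ hu'
      exact congrArg Subtype.val this

lemma lift_adj_label {β β' : DColoring G k v} {c : Fin k} (hc : Compat G k v β c)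
    (hc' : Compat G k v β' c)
    (hadj : (SLG (G.induce (delSet v)) k (Tdel T v)).Adj β β') :
    (SLG G k T).Adj (extColoring β c hc) (extColoring β' c hc') :=
  ⟨lift_adj hc hc' hadj.1, by rw [label_ext, label_ext, hadj.2]⟩

lemma lift_reach (hN : ∀ u : V, G.Adj v u → u ∈ T) {β β' : DColoring G k v} {c : Fin k}
    (hr : (SLG (G.induce (delSet v)) k (Tdel T v)).Reachable β β')
    (hc : Compat G k v β c) (hc' : Compat G k v β' c) :
    csgNode G k T (extColoring β c hc) = csgNode G k T (extColoring β' c hc') := by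
  obtain ⟨p⟩ := hr
  induction p with
  | nil => rfl
  | @cons x y z hadj p ih =>
    have hcy : Compat G k v y c := compat_congr hN hadj.2 hc
    exact (SimpleGraph.ConnectedComponent.sound
      (lift_adj_label hc hcy hadj).reachable).trans (ih hcy hc')

lemma down_adj (hvT : v ∈ T) {a b : {α : V → Fin k // IsColoring G k α}}
    (hadj : (SLG G k T).Adj a b) :
    (SLG (G.induce (delSet v)) k (Tdel T v)).Adj (restrictColoring G k (delSet v) a)
      (restrictColoring G k (delSet v) b) ∧ a.1 v = b.1 v := by
  obtain ⟨⟨w, hw, huniq⟩, hlab⟩ := hadj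
  have hwT : w ∉ T := fun hwT => hw (congrFun hlab ⟨w, hwT⟩)
  have hwv : w ≠ v := fun e => hwT (e ▸ hvT)
  refine ⟨⟨⟨⟨w, hwv⟩, hw, ?_⟩, ?_⟩, congrFun hlab ⟨v, hvT⟩⟩
  · intro u hu
    exact Subtype.ext (huniq u.1 hu)
  · funext t
    exact congrFun hlab ⟨t.1.1, t.2⟩

lemma down_reach (hvT : v ∈ T) {a b : {α : V → Fin k // IsColoring G k α}}
    (hr : (SLG G k T).Reachable a b) :
    csgNode (G.induce (delSet v)) k (Tdel T v) (restrictColoring G k (delSet v) a) =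
      csgNode (G.induce (delSet v)) k (Tdel T v) (restrictColoring G k (delSet v) b) ∧
    a.1 v = b.1 v := by
  obtain ⟨p⟩ := hr
  induction p with
  | nil => exact ⟨rfl, rfl⟩
  | @cons x y z hadj p ih =>
    obtain ⟨h1, h2⟩ := down_adj hvT hadj
    exact ⟨(SimpleGraph.ConnectedComponent.sound h1.reachable).trans ih.1, h2.trans ih.2⟩

lemma extLabel_restrict (γ : {α : V → Fin k // IsColoring G k α}) :
    extLabel T v (γ.1 v)
      (csgLabelFun (G.induce (delSet v)) k (Tdel T v) (restrictColoring G k (delSet v) γ)) =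
    fun t : ↥T => γ.1 t.1 := by
  funext t
  show (if h : (t : V) = v then γ.1 v else γ.1 t.1) = γ.1 t.1
  split
  · next h => rw [h]
  · rfl

/-- The map sending a coloring of `G` to the corresponding node of the introduce graph. -/
def psi (hvT : v ∈ T) (γ : {α : V → Fin k // IsColoring G k α}) : IntroNode G k T v :=
  ⟨(csgNode (G.induce (delSet v)) k (Tdel T v) (restrictColoring G k (delSet v) γ), γ.1 v), by
    show IsColoring (G.induce T) k (extLabel T v (γ.1 v)
      (csgLabelFun (G.induce (delSet v)) k (Tdel T v) (restrictColoring G k (delSet v) γ)))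
    rw [extLabel_restrict]
    exact fun u w h => γ.2 u.1 w.1 h⟩

/-- `psi` descends to label components. -/
def Psi (hvT : v ∈ T) : CSGNode G k T → IntroNode G k T v :=
  SimpleGraph.ConnectedComponent.lift (psi hvT) (by
    intro a b p _
    have hr := down_reach (v := v) hvT (Nonempty.intro p : (SLG G k T).Reachable a b)
    exact Subtype.ext (Prod.ext hr.1 hr.2))

lemma Psi_injective (hvT : v ∈ T) (hN : ∀ u : V, G.Adj v u → u ∈ T) :
    Function.Injective (Psi (G := G) (k := k) (T := T) (v := v) hvT) := by
  intro C D h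
  induction C using SimpleGraph.ConnectedComponent.ind with | _ a =>
  induction D using SimpleGraph.ConnectedComponent.ind with | _ b =>
  have h1 : csgNode (G.induce (delSet v)) k (Tdel T v) (restrictColoring G k (delSet v) a)
      = csgNode (G.induce (delSet v)) k (Tdel T v) (restrictColoring G k (delSet v) b) :=
    congrArg (fun p : IntroNode G k T v => p.1.1) h
  have h2 : a.1 v = b.1 v := congrArg (fun p : IntroNode G k T v => p.1.2) h
  have hr := SimpleGraph.ConnectedComponent.exact h1
  have hcb : Compat G k v (restrictColoring G k (delSet v) b) (a.1 v) := by
    rw [h2]; exact compat_restrict b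
  have key := lift_reach hN hr (compat_restrict a) hcb
  rw [ext_restrict a] at key
  have hb : extColoring (restrictColoring G k (delSet v) b) (a.1 v) hcb = b := by
    apply Subtype.ext; funext u
    show (if h : u = v then a.1 v else b.1 u) = b.1 u
    split
    · next h => rw [h2, h]
    · rfl
  rw [hb] at key
  exact key

lemma Psi_surjective (hvT : v ∈ T) (hN : ∀ u : V, G.Adj v u → u ∈ T) :
    Function.Surjective (Psi (G := G) (k := k) (T := T) (v := v) hvT) := by
  rintro ⟨⟨x, c⟩, hp⟩
  induction x using SimpleGraph.ConnectedComponent.ind with | _ β =>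
  have hp' : IsColoring (G.induce T) k
      (extLabel T v c (csgLabelFun (G.induce (delSet v)) k (Tdel T v) β)) := hp
  have hc : Compat G k v β c := compat_of_proper hvT hN hp'
  refine ⟨csgNode G k T (extColoring β c hc), Subtype.ext (Prod.ext ?_ ?_)⟩
  · show csgNode (G.induce (delSet v)) k (Tdel T v)
      (restrictColoring G k (delSet v) (extColoring β c hc)) = _
    rw [restrict_ext]
    rfl
  · exact ext_val_v β c hc

lemma adj_iff (hvT : v ∈ T) (hN : ∀ u : V, G.Adj v u → u ∈ T) (C D : CSGNode G k T) :
    (introGraph G k T v).Adj (Psi hvT C) (Psi hvT D) ↔ (CSG G k T).Adj C D := by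
  induction C using SimpleGraph.ConnectedComponent.ind with | _ a =>
  induction D using SimpleGraph.ConnectedComponent.ind with | _ b =>
  constructor
  · rintro ⟨hne, hcase⟩
    refine ⟨fun h => hne (congrArg (Psi hvT) h), ?_⟩
    rcases hcase with h1 | ⟨hadj', hcd⟩
    · -- same first component, different colors for v
      have h1' : csgNode (G.induce (delSet v)) k (Tdel T v) (restrictColoring G k (delSet v) a)
          = csgNode (G.induce (delSet v)) k (Tdel T v) (restrictColoring G k (delSet v) b) := h1
      have hlab : csgLabelFun (G.induce (delSet v)) k (Tdel T v) (restrictColoring G k (delSet v) a)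
          = csgLabelFun (G.induce (delSet v)) k (Tdel T v) (restrictColoring G k (delSet v) b) :=
        congrArg (csgLabel (G.induce (delSet v)) k (Tdel T v)) h1'
      have hcb : Compat G k v (restrictColoring G k (delSet v) b) (a.1 v) :=
        compat_congr hN hlab (compat_restrict a)
      have key := lift_reach hN (SimpleGraph.ConnectedComponent.exact h1')
        (compat_restrict a) hcb
      rw [ext_restrict a] at key
      have hv : a.1 v ≠ b.1 v := fun e => hne (Subtype.ext (Prod.ext h1 e))
      refine ⟨extColoring (restrictColoring G k (delSet v) b) (a.1 v) hcb, b, key.symm, rfl, v, ?_, ?_⟩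
      · show (extColoring (restrictColoring G k (delSet v) b) (a.1 v) hcb).1 v ≠ b.1 v
        rw [ext_val_v]
        exact hv
      · intro u hu
        by_contra huv
        apply hu
        show (if h : u = v then a.1 v else b.1 u) = b.1 u
        rw [dif_neg huv]
    · -- adjacent first components, same color for v
      obtain ⟨hne', β, β', hβ, hβ', hββ'⟩ := hadj'
      have hβ1 : csgNode (G.induce (delSet v)) k (Tdel T v) β
          = csgNode (G.induce (delSet v)) k (Tdel T v) (restrictColoring G k (delSet v) a) := hβ
      have hβ'1 : csgNode (G.induce (delSet v)) k (Tdel T v) β'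
          = csgNode (G.induce (delSet v)) k (Tdel T v) (restrictColoring G k (delSet v) b) := hβ'
      have hcd' : a.1 v = b.1 v := hcd
      have hcβ : Compat G k v β (a.1 v) :=
        compat_congr hN (congrArg (csgLabel (G.induce (delSet v)) k (Tdel T v)) hβ1).symm
          (compat_restrict a)
      have hcβ' : Compat G k v β' (a.1 v) := by
        rw [hcd']
        exact compat_congr hN (congrArg (csgLabel (G.induce (delSet v)) k (Tdel T v)) hβ'1).symm
          (compat_restrict b)
      have k1 := lift_reach hN (SimpleGraph.ConnectedComponent.exact hβ1) hcβ (compat_restrict a)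
      rw [ext_restrict a] at k1
      have hcrb : Compat G k v (restrictColoring G k (delSet v) b) (a.1 v) := by
        rw [hcd']; exact compat_restrict b
      have k2 := lift_reach hN (SimpleGraph.ConnectedComponent.exact hβ'1) hcβ' hcrb
      have hb2 : extColoring (restrictColoring G k (delSet v) b) (a.1 v) hcrb = b := by
        apply Subtype.ext; funext u
        show (if h : u = v then a.1 v else b.1 u) = b.1 u
        split
        · next h => rw [hcd', h]
        · rfl
      rw [hb2] at k2
      exact ⟨extColoring β (a.1 v) hcβ, extColoring β' (a.1 v) hcβ', k1, k2,
        lift_adj hcβ hcβ' hββ'⟩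
  · rintro ⟨hne, a', b', ha', hb', hab⟩
    have hpa : psi hvT a' = psi hvT a := congrArg (Psi hvT) ha'
    have hpb : psi hvT b' = psi hvT b := congrArg (Psi hvT) hb'
    have hnepsi : psi hvT a' ≠ psi hvT b' := by
      rw [hpa, hpb]
      exact fun h => hne (Psi_injective hvT hN
        (show Psi hvT (SimpleGraph.connectedComponentMk _ a)
          = Psi hvT (SimpleGraph.connectedComponentMk _ b) from h))
    constructor
    · exact fun h => hne (Psi_injective hvT hN h)
    obtain ⟨w, hw, huniq⟩ := hab
    by_cases hwv : w = v
    · have hre : restrictColoring G k (delSet v) a' = restrictColoring G k (delSet v) b' := by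
        apply Subtype.ext; funext u
        show a'.1 u.1 = b'.1 u.1
        by_contra hne2
        exact u.2 ((huniq u.1 hne2).trans hwv)
      have h11 : (psi hvT a').1.1 = (psi hvT b').1.1 :=
        congrArg (csgNode (G.induce (delSet v)) k (Tdel T v)) hre
      exact Or.inl ((congrArg (fun p : IntroNode G k T v => p.1.1) hpa).symm.trans
        (h11.trans (congrArg (fun p : IntroNode G k T v => p.1.1) hpb)))
    · have hvv : a'.1 v = b'.1 v := by
        by_contra h
        exact hwv (huniq v h).symm
      have hadj'' : (colorGraph (G.induce (delSet v)) k).Adj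
          (restrictColoring G k (delSet v) a') (restrictColoring G k (delSet v) b') := by
        refine ⟨⟨w, hwv⟩, hw, ?_⟩
        intro u hu
        exact Subtype.ext (huniq u.1 hu)
      have hnecomp : csgNode (G.induce (delSet v)) k (Tdel T v) (restrictColoring G k (delSet v) a')
          ≠ csgNode (G.induce (delSet v)) k (Tdel T v) (restrictColoring G k (delSet v) b') := by
        intro he
        exact hnepsi (Subtype.ext (Prod.ext he hvv))
      refine Or.inr ⟨⟨?_, restrictColoring G k (delSet v) a', restrictColoring G k (delSet v) b',
        ?_, ?_, hadj''⟩, ?_⟩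
      · show (psi hvT a).1.1 ≠ (psi hvT b).1.1
        rw [← hpa, ← hpb]
        exact hnecomp
      · show csgNode (G.induce (delSet v)) k (Tdel T v) (restrictColoring G k (delSet v) a')
          = (psi hvT a).1.1
        rw [← hpa]
        rfl
      · show csgNode (G.induce (delSet v)) k (Tdel T v) (restrictColoring G k (delSet v) b')
          = (psi hvT b).1.1
        rw [← hpb]
        rfl
      · show (psi hvT a).1.2 = (psi hvT b).1.2
        rw [← hpa, ← hpb]
        exact hvv

end IntroRuleAux

/-- Introduce rule: if `(G,T)` is obtained from `(G-v, T \ {v})` by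
introducing `v`, then the graph constructed in the introduce rule is (label-preserving
isomorphic to) `C^c_k(G,T)`, and the node `x_c` with `x` the node of the restriction
of `γ` and `c = γ(v)` corresponds to the `γ`-node. -/
theorem statement_3 {V : Type} [Fintype V] [DecidableEq V]
    (G : SimpleGraph V) (k : ℕ) (hk : 1 ≤ k) (T : Set V) (v : V)
    (hvT : v ∈ T) (hTne : T ≠ Set.univ) (hN : ∀ u : V, G.Adj v u → u ∈ T) :
    ∃ φ : introGraph G k T v ≃g CSG G k T,
      (∀ p : IntroNode G k T v,
        csgLabel G k T (φ p) =
          extLabel T v p.1.2 (csgLabel (G.induce (delSet v)) k (Tdel T v) p.1.1)) ∧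
      (∀ (γ : {f : V → Fin k // IsColoring G k f}) (p : IntroNode G k T v),
        p.1.1 = csgNode (G.induce (delSet v)) k (Tdel T v)
            (restrictColoring G k (delSet v) γ) →
        p.1.2 = γ.1 v → φ p = csgNode G k T γ) := by
  classical
  let e : CSGNode G k T ≃ IntroNode G k T v :=
    Equiv.ofBijective (Psi hvT) ⟨Psi_injective hvT hN, Psi_surjective hvT hN⟩
  have he : ∀ C, Psi hvT C = e C := fun _ => rfl
  refine ⟨⟨e.symm, ?_⟩, ?_, ?_⟩
  · intro p q
    have hp : Psi hvT (e.symm p) = p := e.apply_symm_apply p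
    have hq : Psi hvT (e.symm q) = q := e.apply_symm_apply q
    have h := adj_iff hvT hN (e.symm p) (e.symm q)
    rw [hp, hq] at h
    exact h.symm
  · intro p
    obtain ⟨a, ha⟩ := Quot.exists_rep (e.symm p)
    have ha' : csgNode G k T a = e.symm p := ha
    have hpsi : Psi hvT (e.symm p) = p := e.apply_symm_apply p
    rw [← ha'] at hpsi
    have hp2 : psi hvT a = p := hpsi
    subst hp2
    have hphi : e.symm (psi hvT a) = csgNode G k T a := by
      rw [← ha']
    show csgLabel G k T (e.symm (psi hvT a)) = _
    rw [hphi]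
    show csgLabelFun G k T a = extLabel T v (a.1 v)
      (csgLabelFun (G.induce (delSet v)) k (Tdel T v) (restrictColoring G k (delSet v) a))
    rw [extLabel_restrict]
    rfl
  · intro γ p h1 h2
    have hp : p = psi hvT γ := Subtype.ext (Prod.ext h1 h2)
    subst hp
    show e.symm (psi hvT γ) = csgNode G k T γ
    exact e.symm_apply_apply (csgNode G k T γ)
end

section
/- Let G = (V,E) be a chordal graph and let T ⊆ V be a clique of G with T ≠ V, such that G−T is connected and every vertex of T has at least one neighbor in V∖T. Then there exists a vertex u ∈ V∖T that is adjacent to every vertex of T. -/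
open SimpleGraph

abbrev Adm {V : Type} (G : SimpleGraph V) (T : Set V) (u t : V) (m : ℕ) (f : ℕ → V) : Prop :=
  f 0 = u ∧ f m = t ∧ (∀ i, i < m → G.Adj (f i) (f (i + 1))) ∧ (∀ i, i < m → f i ∉ T)

lemma adm_splice {V : Type} {G : SimpleGraph V} {T : Set V} {u t : V} {m : ℕ} {f : ℕ → V}
    (hf : Adm G T u t m f) {i d : ℕ} (hd : 2 ≤ d) (hdm : i + d ≤ m)
    (hadj : G.Adj (f i) (f (i + d))) :
    Adm G T u t (m - (d - 1)) (fun k => if k ≤ i then f k else f (k + (d - 1))) := by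
  obtain ⟨h0, hm, hstep, hT⟩ := hf
  refine ⟨?_, ?_, ?_, ?_⟩
  · show (if 0 ≤ i then f 0 else f (0 + (d - 1))) = u
    rw [if_pos (Nat.zero_le _)]; exact h0
  · show (if m - (d - 1) ≤ i then f (m - (d - 1)) else f (m - (d - 1) + (d - 1))) = t
    rw [if_neg (by omega : ¬ m - (d - 1) ≤ i),
      show m - (d - 1) + (d - 1) = m from by omega]
    exact hm
  · intro k hk
    show G.Adj (if k ≤ i then f k else f (k + (d - 1)))
      (if k + 1 ≤ i then f (k + 1) else f (k + 1 + (d - 1)))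
    by_cases hki : k + 1 ≤ i
    · rw [if_pos (by omega), if_pos hki]
      exact hstep k (by omega)
    · by_cases hki2 : k ≤ i
      · have hk_eq : k = i := by omega
        subst hk_eq
        rw [if_pos le_rfl, if_neg hki, show k + 1 + (d - 1) = k + d from by omega]
        exact hadj
      · rw [if_neg hki2, if_neg (by omega),
          show k + 1 + (d - 1) = k + (d - 1) + 1 from by omega]
        exact hstep _ (by omega)
  · intro k hk
    show (if k ≤ i then f k else f (k + (d - 1))) ∉ T
    by_cases hki : k ≤ i
    · rw [if_pos hki]; exact hT k (by omega)
    · rw [if_neg hki]; exact hT _ (by omega)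

/-- if `G` is chordal, `T` is a clique with `T ≠ V(G)` such that `G − T`
is connected and every vertex of `T` has a neighbor outside `T`, then some vertex
outside `T` is adjacent to every vertex of `T`. -/
theorem statement_8 {V : Type} [Fintype V] [DecidableEq V] (G : SimpleGraph V)
    (hchord : Chordal G) (T : Set V) (hclique : G.IsClique T) (hTne : T ≠ Set.univ)
    (hconn : (G.induce Tᶜ).Connected)
    (hnb : ∀ t ∈ T, ∃ u : V, u ∉ T ∧ G.Adj t u) :
    ∃ u : V, u ∉ T ∧ ∀ t ∈ T, G.Adj u t := by
  classical
  by_contra hgoal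
  push_neg at hgoal
  set ν : V → ℕ := fun v => {x | x ∈ T ∧ G.Adj v x}.ncard with hν
  obtain ⟨u0, hu0⟩ := (Set.ne_univ_iff_exists_notMem T).mp hTne
  obtain ⟨u, huT, hmax⟩ := Set.exists_max_image Tᶜ ν (Set.toFinite _) ⟨u0, hu0⟩
  obtain ⟨t, htT, hut⟩ := hgoal u huT
  have hune : u ≠ t := fun h => huT (h ▸ htT)
  obtain ⟨v0, hv0T, htv0⟩ := hnb t htT
  obtain ⟨W⟩ := hconn.preconnected ⟨u, huT⟩ ⟨v0, hv0T⟩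
  set M : Set ℕ := {m | ∃ f : ℕ → V, Adm G T u t m f} with hM
  have hMne : (W.length + 1) ∈ M := by
    refine ⟨fun k => if k ≤ W.length then (W.getVert k).1 else t, ?_, ?_, ?_, ?_⟩
    · show (if 0 ≤ W.length then (W.getVert 0).1 else t) = u
      rw [if_pos (Nat.zero_le _), W.getVert_zero]
    · show (if W.length + 1 ≤ W.length then (W.getVert (W.length + 1)).1 else t) = t
      rw [if_neg (by omega)]
    · intro i hi
      show G.Adj (if i ≤ W.length then (W.getVert i).1 else t)
        (if i + 1 ≤ W.length then (W.getVert (i + 1)).1 else t)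
      by_cases h : i < W.length
      · rw [if_pos (by omega), if_pos (by omega)]
        exact W.adj_getVert_succ h
      · have hiw : i = W.length := by omega
        subst hiw
        rw [if_pos le_rfl, if_neg (by omega), W.getVert_length]
        exact htv0.symm
    · intro i hi
      show (if i ≤ W.length then (W.getVert i).1 else t) ∉ T
      rw [if_pos (by omega)]
      exact (W.getVert i).2
  obtain ⟨m, hmem, hmin⟩ : ∃ m, m ∈ M ∧ ∀ k, k < m → k ∉ M :=
    ⟨sInf M, Nat.sInf_mem ⟨_, hMne⟩, fun k hk => Nat.notMem_of_lt_sInf hk⟩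
  obtain ⟨f, hf0, hfm, hstep, hfT⟩ := hmem
  have hm2 : 2 ≤ m := by
    by_contra h
    push_neg at h
    interval_cases m
    · exact hune (hf0.symm.trans hfm)
    · have h1 := hstep 0 (by omega)
      rw [hf0, show (0 : ℕ) + 1 = 1 from rfl, hfm] at h1
      exact hut h1
  have hnoadj : ∀ i j : ℕ, i < j → j ≤ m → j ≠ i + 1 → ¬ G.Adj (f i) (f j) := by
    intro i j hij hjm hne hadj
    have hadj' : G.Adj (f i) (f (i + (j - i))) := by
      rw [show i + (j - i) = j from by omega]; exact hadj
    have h := adm_splice (i := i) (d := j - i) ⟨hf0, hfm, hstep, hfT⟩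
      (by omega) (by omega) hadj'
    exact hmin _ (by omega) ⟨_, h⟩
  have hinj : ∀ i j : ℕ, i < j → j ≤ m → f i ≠ f j := by
    intro i j hij hjm heq
    rcases eq_or_lt_of_le hjm with rfl | hjm'
    · exact hfT i (by omega) (by rw [heq, hfm]; exact htT)
    · have hadj : G.Adj (f i) (f (i + (j + 1 - i))) := by
        rw [show i + (j + 1 - i) = j + 1 from by omega, heq]
        exact hstep j hjm'
      have h := adm_splice (i := i) (d := j + 1 - i) ⟨hf0, hfm, hstep, hfT⟩
        (by omega) (by omega) hadj
      exact hmin _ (by omega) ⟨_, h⟩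
  have hfne : ∀ p q : ℕ, p ≤ m → q ≤ m → f p = f q → p = q := by
    intro p q hp hq h
    rcases lt_trichotomy p q with hc | hc | hc
    · exact absurd h (hinj p q hc hq)
    · exact hc
    · exact absurd h.symm (hinj q p hc hp)
  have hff : ∀ p q : ℕ, p ≤ m → q ≤ m → (G.Adj (f p) (f q) ↔ (q = p + 1 ∨ p = q + 1)) := by
    intro p q hp hq
    constructor
    · intro hadj
      rcases lt_trichotomy p q with h | rfl | h
      · left; by_contra hne
        exact hnoadj p q h hq hne hadj
      · exact absurd hadj (G.irrefl (v := _))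
      · right; by_contra hne
        exact hnoadj q p h hp hne hadj.symm
    · rintro (rfl | rfl)
      · exact hstep p (by omega)
      · exact (hstep q (by omega)).symm
  -- key claim
  have hkey : ∀ t' : V, t' ∈ T → G.Adj u t' → G.Adj t' (f (m - 1)) := by
    intro t' ht'T hut'
    have ht'ne : t' ≠ t := fun h => hut (h ▸ hut')
    have ht't : G.Adj t' t := hclique ht'T htT ht'ne
    have ht'notf : ∀ p : ℕ, p ≤ m → t' ≠ f p := by
      intro p hp h
      rcases eq_or_lt_of_le hp with rfl | hl
      · exact ht'ne (h.trans hfm)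
      · exact hfT p hl (h ▸ ht'T)
    set J : Finset ℕ := (Finset.range m).filter (fun i => G.Adj t' (f i)) with hJ
    have h0J : 0 ∈ J := by
      simp only [hJ, Finset.mem_filter, Finset.mem_range]
      exact ⟨by omega, hf0 ▸ hut'.symm⟩
    have hjJ := J.max'_mem ⟨0, h0J⟩
    set j := J.max' ⟨0, h0J⟩ with hjdef
    simp only [hJ, Finset.mem_filter, Finset.mem_range] at hjJ
    obtain ⟨hjm, ht'fj⟩ := hjJ
    have hmaxj : ∀ i, j < i → i < m → ¬ G.Adj t' (f i) := by
      intro i hji him hadj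
      have hiJ : i ∈ J := by
        simp only [hJ, Finset.mem_filter, Finset.mem_range]
        exact ⟨him, hadj⟩
      exact absurd (J.le_max' i hiJ) (by omega)
    by_contra hlast
    have hjm1 : j < m - 1 := by
      rcases Nat.lt_or_ge j (m - 1) with h | h
      · exact h
      · exact absurd ((show j = m - 1 by omega) ▸ ht'fj) hlast
    obtain ⟨r, hm_eq⟩ : ∃ r, m = j + r + 1 := ⟨m - j - 1, by omega⟩
    have hr1 : 1 ≤ r := by omega
    set c : Fin (r + 1 + 2) → V := fun k => if (k : ℕ) = 0 then t' else f (j + (k : ℕ) - 1) with hc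
    have hT'' : ∀ k : ℕ, 1 ≤ k → k ≤ r + 2 → (G.Adj t' (f (j + k - 1)) ↔ (k = 1 ∨ k = r + 2)) := by
      intro k hk1 hk2
      rcases Nat.lt_or_ge k (r + 2) with h | h
      · constructor
        · intro hadj
          by_contra hcon
          push_neg at hcon
          exact hmaxj (j + k - 1) (by omega) (by omega) hadj
        · rintro (rfl | rfl)
          · simpa using ht'fj
          · omega
      · have hk_eq : k = r + 2 := by omega
        subst hk_eq
        rw [show j + (r + 2) - 1 = m from by omega, hfm]
        exact ⟨fun _ => Or.inr rfl, fun _ => ht't⟩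
    have hsub : ∀ a b : Fin (r + 1 + 2), (a - b = 1 ↔ ((a : ℕ) = (b : ℕ) + 1 ∨ ((b : ℕ) = r + 2 ∧ (a : ℕ) = 0))) := by
      intro a b
      have ha := a.isLt
      have hb := b.isLt
      rw [sub_eq_iff_eq_add, Fin.ext_iff, Fin.val_add, Fin.val_one]
      rcases eq_or_ne (b : ℕ) (r + 2) with h | h
      · rw [h, show 1 + (r + 2) = r + 1 + 2 from by omega, Nat.mod_self]
        omega
      · rw [Nat.mod_eq_of_lt (by omega)]
        omega
    have hcyc : ∀ a b : Fin (r + 1 + 2), ((cycleGraph (r + 1 + 2)).Adj a b ↔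
        ((b : ℕ) = (a : ℕ) + 1 ∨ (a : ℕ) = (b : ℕ) + 1 ∨
          ((a : ℕ) = 0 ∧ (b : ℕ) = r + 2) ∨ ((b : ℕ) = 0 ∧ (a : ℕ) = r + 2))) := by
      intro a b
      rw [cycleGraph_adj, hsub a b, hsub b a]
      omega
    have hGadj : ∀ a b : Fin (r + 1 + 2), (G.Adj (c a) (c b) ↔
        ((b : ℕ) = (a : ℕ) + 1 ∨ (a : ℕ) = (b : ℕ) + 1 ∨
          ((a : ℕ) = 0 ∧ (b : ℕ) = r + 2) ∨ ((b : ℕ) = 0 ∧ (a : ℕ) = r + 2))) := by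
      intro a b
      have ha := a.isLt
      have hb := b.isLt
      by_cases ha0 : (a : ℕ) = 0 <;> by_cases hb0 : (b : ℕ) = 0
      · simp only [hc]
        rw [if_pos ha0, if_pos hb0]
        constructor
        · intro h; exact absurd h (G.irrefl (v := _))
        · intro h; exfalso; omega
      · simp only [hc]
        rw [if_pos ha0, if_neg hb0]
        rw [hT'' (b : ℕ) (by omega) (by omega)]
        omega
      · simp only [hc]
        rw [if_neg ha0, if_pos hb0, G.adj_comm]
        rw [hT'' (a : ℕ) (by omega) (by omega)]
        omega
      · simp only [hc]
        rw [if_neg ha0, if_neg hb0]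
        rw [hff (j + (a : ℕ) - 1) (j + (b : ℕ) - 1) (by omega) (by omega)]
        omega
    have hcinj : Function.Injective c := by
      intro a b hab
      have ha := a.isLt
      have hb := b.isLt
      by_cases ha0 : (a : ℕ) = 0 <;> by_cases hb0 : (b : ℕ) = 0
      · exact Fin.ext (by omega)
      · simp only [hc] at hab
        rw [if_pos ha0, if_neg hb0] at hab
        exact absurd hab (ht'notf _ (by omega))
      · simp only [hc] at hab
        rw [if_neg ha0, if_pos hb0] at hab
        exact absurd hab.symm (ht'notf _ (by omega))
      · simp only [hc] at hab
        rw [if_neg ha0, if_neg hb0] at hab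
        have := hfne _ _ (by omega) (by omega) hab
        exact Fin.ext (by omega)
    have hemb : cycleGraph (r + 1 + 2) ↪g G :=
      ⟨⟨c, hcinj⟩, fun {a b} => (hGadj a b).trans (hcyc a b).symm⟩
    exact (hchord (r + 1 + 2) (by omega)).false hemb
  -- conclusion
  have hw : f (m - 1) ∉ T := hfT (m - 1) (by omega)
  have hwt : G.Adj (f (m - 1)) t := by
    have h := hstep (m - 1) (by omega)
    rw [show m - 1 + 1 = m from by omega, hfm] at h
    exact h
  have hsubset : insert t {x | x ∈ T ∧ G.Adj u x} ⊆ {x | x ∈ T ∧ G.Adj (f (m - 1)) x} := by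
    intro x hx
    rcases hx with rfl | ⟨hxT, hux⟩
    · exact ⟨htT, hwt⟩
    · exact ⟨hxT, (hkey x hxT hux).symm⟩
  have htA : t ∉ {x | x ∈ T ∧ G.Adj u x} := fun h => hut h.2
  have h1 : ν u + 1 ≤ ν (f (m - 1)) := by
    simp only [hν]
    calc {x | x ∈ T ∧ G.Adj u x}.ncard + 1
        = (insert t {x | x ∈ T ∧ G.Adj u x}).ncard :=
          (Set.ncard_insert_of_notMem htA (Set.toFinite _)).symm
      _ ≤ _ := Set.ncard_le_ncard hsubset (Set.toFinite _)
  have h2 : ν (f (m - 1)) ≤ ν u := hmax _ hw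
  omega
end
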